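/- Assume (a.3) and (a.4). Then the function t ↦ |G(t)/ψ(t)| is bounded near 0 and tends to 0 as t → 0, where G(s) = ∫₀ˢ e^{2πi g(t)} dt and g is any phase with g''(t) ≥ γ''(t) on (0,1]. Specifically, |G(t)/ψ(t)| ≤ C·γ''(t)^{−ρ/3} for small t. -/

import Mathlib

open Real Set intervalIntegral

open MeasureTheory
lemma norm_exp_two_pi_I (x : ℝ) : ‖Complex.exp (2 * Real.pi * Complex.I * x)‖ = 1 := by
  have h : (2 * Real.pi * Complex.I * (x:ℂ)) = ((2 * Real.pi * x : ℝ) : ℂ) * Complex.I := by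
    push_cast; ring
  rw [h, Complex.norm_exp_ofReal_mul_I]

lemma fdt {g g' g'' : ℝ → ℝ} {a b μ : ℝ} (hab : a ≤ b) (hμ : 0 < μ)
    (hg1 : ∀ t ∈ Icc a b, HasDerivAt g (g' t) t)
    (hg2 : ∀ t ∈ Icc a b, HasDerivAt g' (g'' t) t)
    (hg''0 : ∀ t ∈ Icc a b, 0 ≤ g'' t)
    (hlow : ∀ t ∈ Icc a b, μ ≤ |g' t|) :
    ‖∫ s in a..b, Complex.exp (2 * Real.pi * Complex.I * g s)‖ ≤ 1 / μ := by
  have hpi : (0:ℝ) < 2 * Real.pi := by positivity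
  have hne : ∀ t ∈ Icc a b, g' t ≠ 0 := by
    intro t ht h0
    have := hlow t ht; rw [h0, abs_zero] at this; linarith
  have hIcc : uIcc a b = Icc a b := uIcc_of_le hab
  set K : ℂ := 2 * Real.pi * Complex.I with hK
  have hKne : K ≠ 0 := by
    simp [hK, Complex.I_ne_zero, Real.pi_ne_zero]
  set u : ℝ → ℂ := fun s => (K * (g' s : ℂ))⁻¹ with hu
  set v : ℝ → ℂ := fun s => Complex.exp (K * (g s : ℂ)) with hv
  set v' : ℝ → ℂ := fun s => Complex.exp (K * (g s : ℂ)) * (K * (g' s : ℂ)) with hv'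
  set w : ℝ → ℝ := fun s => g'' s / (g' s) ^ 2 with hw
  set u' : ℝ → ℂ := fun s => -((w s : ℝ) : ℂ) * K⁻¹ with hu'
  -- derivatives
  have hcK : ∀ t ∈ Icc a b, (K * (g' t : ℂ)) ≠ 0 := fun t ht =>
    mul_ne_zero hKne (by exact_mod_cast hne t ht)
  have hvd : ∀ t ∈ uIcc a b, HasDerivAt v (v' t) t := by
    intro t ht; rw [hIcc] at ht
    exact ((hg1 t ht).ofReal_comp.const_mul K).cexp
  have hud : ∀ t ∈ uIcc a b, HasDerivAt u (u' t) t := by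
    intro t ht; rw [hIcc] at ht
    have h1 : HasDerivAt (fun s => K * (g' s : ℂ)) (K * (g'' t : ℂ)) t :=
      (hg2 t ht).ofReal_comp.const_mul K
    have h2 := (hasDerivAt_inv (hcK t ht)).comp t h1
    refine h2.congr_deriv ?_
    have hg'ne : ((g' t : ℂ)) ≠ 0 := by exact_mod_cast hne t ht
    simp only [hu', hw]
    push_cast
    field_simp
  -- continuity of g'
  have hg'cont : ContinuousOn g' (Icc a b) := fun t ht =>
    (hg2 t ht).continuousAt.continuousWithinAt
  -- integrability of w
  have hwd : ∀ t ∈ Icc a b, HasDerivAt (fun s => -(g' s)⁻¹) (w t) t := by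
    intro t ht
    have := ((hg2 t ht).inv (hne t ht)).neg
    refine this.congr_deriv ?_
    simp only [hw]
    ring
  have hw_int : IntervalIntegrable w volume a b := by
    apply intervalIntegrable_deriv_of_nonneg (g := fun s => -(g' s)⁻¹)
    · rw [hIcc]; exact (hg'cont.inv₀ hne).neg
    · intro x hx
      rw [min_eq_left hab, max_eq_right hab] at hx
      exact hwd x (Ioo_subset_Icc_self hx)
    · intro x hx
      rw [min_eq_left hab, max_eq_right hab] at hx
      have hx' := Ioo_subset_Icc_self hx
      exact div_nonneg (hg''0 x hx') (sq_nonneg _)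
  have hu'_int : IntervalIntegrable u' volume a b := by
    have h1 : IntervalIntegrable (fun s => ((w s : ℝ) : ℂ)) volume a b :=
      ⟨hw_int.1.ofReal, hw_int.2.ofReal⟩
    simpa [hu', neg_mul, Pi.neg_def] using (h1.mul_const K⁻¹).neg
  have hgcont : ContinuousOn g (Icc a b) := fun t ht =>
    (hg1 t ht).continuousAt.continuousWithinAt
  have hv'_cont : ContinuousOn v' (uIcc a b) := by
    rw [hIcc]
    apply ContinuousOn.mul
    · exact Complex.continuous_exp.comp_continuousOn
        (continuousOn_const.mul (Complex.continuous_ofReal.comp_continuousOn hgcont))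
    · exact continuousOn_const.mul (Complex.continuous_ofReal.comp_continuousOn hg'cont)
  have hv'_int : IntervalIntegrable v' volume a b := hv'_cont.intervalIntegrable
  -- integration by parts
  have hparts :=
    intervalIntegral.integral_mul_deriv_eq_deriv_mul hud hvd hu'_int hv'_int
  have hkey : (∫ s in a..b, Complex.exp (2 * Real.pi * Complex.I * (g s : ℂ)))
      = ∫ s in a..b, u s * v' s := by
    apply intervalIntegral.integral_congr
    intro s hs; rw [hIcc] at hs
    simp only [hu, hv']
    rw [mul_comm (Complex.exp _), ← mul_assoc, inv_mul_cancel₀ (hcK s hs), one_mul]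
  -- FTC for w
  have hw_eq : (∫ s in a..b, w s) = (g' a)⁻¹ - (g' b)⁻¹ := by
    have := intervalIntegral.integral_eq_sub_of_hasDerivAt
      (f := fun s => -(g' s)⁻¹) (f' := w)
      (fun t ht => hwd t (hIcc ▸ ht)) hw_int
    rw [this]; ring
  -- norms
  have hnu : ∀ t ∈ Icc a b, ‖u t‖ ≤ (2 * Real.pi * μ)⁻¹ := by
    intro t ht
    have : ‖u t‖ = (2 * Real.pi * |g' t|)⁻¹ := by
      simp [hu, hK, norm_mul, Complex.norm_real, abs_of_pos Real.pi_pos,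
        Real.norm_eq_abs]
    rw [this]
    apply inv_anti₀ (by positivity)
    have := hlow t ht
    nlinarith [Real.pi_pos]
  have hnv : ∀ t : ℝ, ‖v t‖ = 1 := fun t => norm_exp_two_pi_I (g t)
  -- bound the remainder integral
  have hrem : ‖∫ s in a..b, u' s * v s‖ ≤ (2 * Real.pi)⁻¹ * (2 / μ) := by
    have h1 : ‖∫ s in a..b, u' s * v s‖ ≤ ∫ s in a..b, ‖u' s * v s‖ :=
      intervalIntegral.norm_integral_le_integral_norm hab
    have h2 : (∫ s in a..b, ‖u' s * v s‖) = ∫ s in a..b, (2 * Real.pi)⁻¹ * w s := by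
      apply intervalIntegral.integral_congr
      intro s hs; rw [hIcc] at hs
      have hwnn : 0 ≤ w s := div_nonneg (hg''0 s hs) (sq_nonneg _)
      show ‖u' s * v s‖ = (2 * Real.pi)⁻¹ * w s
      rw [norm_mul, hnv, mul_one]
      simp [hu', hK, norm_mul, Complex.norm_real, abs_of_pos Real.pi_pos,
        Real.norm_eq_abs, abs_of_nonneg hwnn]
      ring
    have h3 : (∫ s in a..b, (2 * Real.pi)⁻¹ * w s) = (2 * Real.pi)⁻¹ * ((g' a)⁻¹ - (g' b)⁻¹) := by
      rw [intervalIntegral.integral_const_mul, hw_eq]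
    have habs : ∀ t ∈ Icc a b, |(g' t)⁻¹| ≤ μ⁻¹ := by
      intro t ht
      rw [abs_inv]
      exact inv_anti₀ hμ (hlow t ht)
    have ha' := habs a ⟨le_refl a, hab⟩
    have hb' := habs b ⟨hab, le_refl b⟩
    have h4 : (g' a)⁻¹ - (g' b)⁻¹ ≤ 2 / μ := by
      have h5 := abs_le.1 ha'
      have h6 := abs_le.1 hb'
      have : 2 / μ = μ⁻¹ + μ⁻¹ := by field_simp; ring
      rw [this]; linarith [h5.2, h6.1]
    calc ‖∫ s in a..b, u' s * v s‖ ≤ ∫ s in a..b, ‖u' s * v s‖ := h1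
      _ = (2 * Real.pi)⁻¹ * ((g' a)⁻¹ - (g' b)⁻¹) := by rw [h2, h3]
      _ ≤ (2 * Real.pi)⁻¹ * (2 / μ) := by
          apply mul_le_mul_of_nonneg_left h4 (by positivity)
  -- assemble
  have hfinal : ‖∫ s in a..b, Complex.exp (2 * Real.pi * Complex.I * (g s : ℂ))‖
      ≤ (2 * Real.pi * μ)⁻¹ + (2 * Real.pi * μ)⁻¹ + (2 * Real.pi)⁻¹ * (2 / μ) := by
    rw [hkey, hparts]
    calc ‖u b * v b - u a * v a - ∫ s in a..b, u' s * v s‖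
        ≤ ‖u b * v b - u a * v a‖ + ‖∫ s in a..b, u' s * v s‖ := norm_sub_le _ _
      _ ≤ (‖u b * v b‖ + ‖u a * v a‖) + ‖∫ s in a..b, u' s * v s‖ := by
          gcongr; exact norm_sub_le _ _
      _ ≤ (2 * Real.pi * μ)⁻¹ + (2 * Real.pi * μ)⁻¹ + (2 * Real.pi)⁻¹ * (2 / μ) := by
          rw [norm_mul, norm_mul, hnv, hnv, mul_one, mul_one]
          have := hnu a ⟨le_refl a, hab⟩
          have := hnu b ⟨hab, le_refl b⟩
          linarith [hrem]
  refine hfinal.trans ?_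
  have hπ2 : (2:ℝ) ≤ Real.pi := Real.two_le_pi
  have hπ : (0:ℝ) < Real.pi := Real.pi_pos
  have h : (2 * Real.pi * μ)⁻¹ + (2 * Real.pi * μ)⁻¹ + (2 * Real.pi)⁻¹ * (2 / μ)
      = (2 / Real.pi) * (1 / μ) := by field_simp; ring
  rw [h]
  calc (2 / Real.pi) * (1 / μ) ≤ 1 * (1 / μ) :=
        mul_le_mul_of_nonneg_right ((div_le_one hπ).2 hπ2) (by positivity)
    _ = 1 / μ := one_mul _

lemma sdt {g g' g'' : ℝ → ℝ} {a b L : ℝ} (hab : a ≤ b) (hL : 0 < L)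
    (hg1 : ∀ t ∈ Icc a b, HasDerivAt g (g' t) t)
    (hg2 : ∀ t ∈ Icc a b, HasDerivAt g' (g'' t) t)
    (hg'' : ∀ t ∈ Icc a b, L ≤ g'' t) :
    ‖∫ s in a..b, Complex.exp (2 * Real.pi * Complex.I * g s)‖ ≤ 4 / Real.sqrt L := by
  set m := Real.sqrt L with hm
  have hm0 : 0 < m := Real.sqrt_pos.2 hL
  have hm2 : m ^ 2 = L := Real.sq_sqrt hL.le
  -- slope estimate and monotonicity of g'
  have hg'contIcc : ContinuousOn g' (Icc a b) := fun t ht =>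
    (hg2 t ht).continuousAt.continuousWithinAt
  have hDD : ∀ x ∈ Ioo a b, HasDerivAt (fun x => g' x - L * x) (g'' x - L) x := by
    intro x hx
    have := (hg2 x (Ioo_subset_Icc_self hx)).sub ((hasDerivAt_id x).const_mul L)
    rw [mul_one] at this
    exact this
  have hmono_aux : MonotoneOn (fun x => g' x - L * x) (Icc a b) := by
    apply monotoneOn_of_deriv_nonneg (convex_Icc a b)
    · exact hg'contIcc.sub (continuousOn_const.mul continuousOn_id)
    · intro x hx
      rw [interior_Icc] at hx
      exact (hDD x hx).differentiableAt.differentiableWithinAt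
    · intro x hx
      rw [interior_Icc] at hx
      rw [(hDD x hx).deriv]
      have := hg'' x (Ioo_subset_Icc_self hx)
      linarith
  have hslope : ∀ s ∈ Icc a b, ∀ u ∈ Icc a b, s ≤ u → L * (u - s) ≤ g' u - g' s := by
    intro s hs t ht hst
    have := hmono_aux hs ht hst
    dsimp at this; linarith [this]
  have hg'mono : MonotoneOn g' (Icc a b) := by
    intro s hs t ht hst
    have := hslope s hs t ht hst
    nlinarith
  -- interval splitting points
  set S : Set ℝ := insert a {s ∈ Icc a b | g' s ≤ -m} with hS
  set T : Set ℝ := insert b {s ∈ Icc a b | m ≤ g' s} with hT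
  have hSne : S.Nonempty := ⟨a, mem_insert a _⟩
  have hTne : T.Nonempty := ⟨b, mem_insert b _⟩
  have hSbdd : BddAbove S := ⟨b, fun x hx => by
    rcases hx with rfl | hx; exact hab; exact hx.1.2⟩
  have hTbdd : BddBelow T := ⟨a, fun x hx => by
    rcases hx with rfl | hx; exact hab; exact hx.1.1⟩
  set c := sSup S with hc
  set d := sInf T with hd
  have hac : a ≤ c := le_csSup hSbdd (mem_insert a _)
  have hcb : c ≤ b := csSup_le hSne (fun x hx => by
    rcases hx with rfl | hx; exact hab; exact hx.1.2)
  have had : a ≤ d := le_csInf hTne (fun x hx => by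
    rcases hx with rfl | hx; exact hab; exact hx.1.1)
  have hdb : d ≤ b := csInf_le hTbdd (mem_insert b _)
  -- key sign facts
  have key1 : ∀ s ∈ Icc a b, s < c → g' s ≤ -m := by
    intro s hs hsc
    obtain ⟨x, hxS, hsx⟩ := exists_lt_of_lt_csSup hSne hsc
    rcases hxS with rfl | hx
    · exact absurd hsx (not_lt.2 hs.1)
    · exact le_trans (hg'mono hs hx.1 hsx.le) hx.2
  have key2 : ∀ s ∈ Icc a b, d < s → m ≤ g' s := by
    intro s hs hds
    obtain ⟨x, hxT, hxs⟩ := exists_lt_of_csInf_lt hTne hds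
    rcases hxT with rfl | hx
    · exact absurd hxs (not_lt.2 hs.2)
    · exact le_trans hx.2 (hg'mono hx.1 hs hxs.le)
  have hcd : c ≤ d := by
    by_contra hdc
    push_neg at hdc
    obtain ⟨x, hxS, hdx⟩ := exists_lt_of_lt_csSup hSne hdc
    rcases hxS with rfl | hx
    · exact absurd hdx (not_lt.2 had)
    · have := key2 x hx.1 hdx
      linarith [hx.2, hm0]
  -- middle interval is short
  have hmid : d - c ≤ 2 * m / L := by
    by_contra h'
    push_neg at h'
    have hml : 0 < 2 * m / L := by positivity
    set ε := (d - c - 2 * m / L) / 4 with hε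
    have hε0 : 0 < ε := by simp only [hε]; linarith
    set s := c + ε with hs
    set u := d - ε with hu
    have husval : u - s = (d - c) / 2 + m / L := by simp only [hs, hu, hε]; ring
    have hsu : s < u := by
      have : 0 < (d - c)/2 + m / L := by nlinarith
      linarith [husval]
    have hsIcc : s ∈ Icc a b := ⟨by simp only [hs]; linarith, by simp only [hs]; nlinarith⟩
    have huIcc : u ∈ Icc a b := ⟨by simp only [hu]; nlinarith, by simp only [hu]; linarith⟩
    have hcs : c < s := by simp only [hs]; linarith
    have hud : u < d := by simp only [hu]; linarith
    -- on (c,d), |g'| < m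
    have hbound : ∀ x ∈ Icc a b, c < x → x < d → -m ≤ g' x ∧ g' x ≤ m := by
      intro x hx hcx hxd
      constructor
      · by_contra hneg
        push_neg at hneg
        have : x ∈ S := Or.inr ⟨hx, hneg.le⟩
        exact absurd (le_csSup hSbdd this) (not_le.2 hcx)
      · by_contra hposx
        push_neg at hposx
        have : x ∈ T := Or.inr ⟨hx, hposx.le⟩
        exact absurd (csInf_le hTbdd this) (not_le.2 hxd)
    have h1 := hbound s hsIcc hcs (lt_trans hsu hud)
    have h2 := hbound u huIcc (lt_trans hcs hsu) hud
    have h3 := hslope s hsIcc u huIcc hsu.le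
    -- L * (u - s) ≤ g' u - g' s ≤ 2m, but u - s = (d-c)/2 + m/L > 2m/L... gives L(u-s) > 2m
    have h4 : L * (u - s) ≤ 2 * m := by linarith [h1.1, h2.2, h3]
    rw [husval] at h4
    -- L * ((d-c)/2 + m/L) ≤ 2m, i.e. L(d-c)/2 + m ≤ 2m, i.e. L(d-c) ≤ 2m, i.e. d-c ≤ 2m/L
    have h5 : L * ((d - c) / 2 + m / L) = L * (d - c) / 2 + m := by field_simp
    rw [h5] at h4
    have h6 : L * (d - c) ≤ 2 * m := by linarith
    have h7 : d - c ≤ 2 * m / L := by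
      rw [le_div_iff₀ hL]; linarith [h6]
    linarith
  -- integrand continuity
  have hgcont : ContinuousOn g (Icc a b) := fun t ht =>
    (hg1 t ht).continuousAt.continuousWithinAt
  have hfc : ContinuousOn (fun s => Complex.exp (2 * Real.pi * Complex.I * g s)) (Icc a b) :=
    Complex.continuous_exp.comp_continuousOn
      (continuousOn_const.mul (Complex.continuous_ofReal.comp_continuousOn hgcont))
  have hint : ∀ p ∈ Icc a b, ∀ q ∈ Icc a b,
      IntervalIntegrable (fun s => Complex.exp (2 * Real.pi * Complex.I * g s)) volume p q := by
    intro p hp q hq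
    exact (hfc.mono (uIcc_subset_Icc hp hq)).intervalIntegrable
  -- split
  have hsplit : (∫ s in a..b, Complex.exp (2 * Real.pi * Complex.I * g s))
      = (∫ s in a..c, Complex.exp (2 * Real.pi * Complex.I * g s))
      + (∫ s in c..d, Complex.exp (2 * Real.pi * Complex.I * g s))
      + (∫ s in d..b, Complex.exp (2 * Real.pi * Complex.I * g s)) := by
    have e1 := intervalIntegral.integral_add_adjacent_intervals
      (hint c ⟨hac, hcb⟩ d ⟨had, hdb⟩) (hint d ⟨had, hdb⟩ b ⟨hab, le_refl b⟩)
    have e2 := intervalIntegral.integral_add_adjacent_intervals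
      (hint a ⟨le_refl a, hab⟩ c ⟨hac, hcb⟩) (hint c ⟨hac, hcb⟩ b ⟨hab, le_refl b⟩)
    rw [← e2, ← e1]
    ring
  -- bound on [a,c]
  have hbound1 : ‖∫ s in a..c, Complex.exp (2 * Real.pi * Complex.I * g s)‖ ≤ 1 / m := by
    rcases eq_or_lt_of_le hac with heq | hlt
    · rw [← heq, intervalIntegral.integral_same, norm_zero]; positivity
    · have hcIcc : c ∈ Icc a b := ⟨hac, hcb⟩
      have hgc : g' c ≤ -m := by
        have htd : Filter.Tendsto g' (nhdsWithin c (Iio c)) (nhds (g' c)) :=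
          ((hg2 c hcIcc).continuousAt.continuousWithinAt : ContinuousWithinAt g' (Iio c) c)
        have hev : ∀ᶠ x in nhdsWithin c (Iio c), g' x ≤ -m := by
          filter_upwards [Ioo_mem_nhdsLT hlt] with x hx
          exact key1 x ⟨hx.1.le, hx.2.le.trans hcb⟩ hx.2
        exact le_of_tendsto htd hev
      apply fdt hac hm0
      · exact fun t ht => hg1 t (Icc_subset_Icc_right hcb ht)
      · exact fun t ht => hg2 t (Icc_subset_Icc_right hcb ht)
      · intro t ht
        exact le_trans hL.le (hg'' t (Icc_subset_Icc_right hcb ht))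
      · intro t ht
        have htb : t ∈ Icc a b := Icc_subset_Icc_right hcb ht
        have : g' t ≤ -m := by
          rcases eq_or_lt_of_le ht.2 with rfl | hlt2
          · exact hgc
          · exact key1 t htb hlt2
        rw [abs_of_nonpos (by linarith)]
        linarith
  -- bound on [d,b]
  have hbound3 : ‖∫ s in d..b, Complex.exp (2 * Real.pi * Complex.I * g s)‖ ≤ 1 / m := by
    rcases eq_or_lt_of_le hdb with heq | hlt
    · rw [heq, intervalIntegral.integral_same, norm_zero]; positivity
    · have hdIcc : d ∈ Icc a b := ⟨had, hdb⟩
      have hgd : m ≤ g' d := by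
        have htd : Filter.Tendsto g' (nhdsWithin d (Ioi d)) (nhds (g' d)) :=
          ((hg2 d hdIcc).continuousAt.continuousWithinAt : ContinuousWithinAt g' (Ioi d) d)
        have hev : ∀ᶠ x in nhdsWithin d (Ioi d), m ≤ g' x := by
          filter_upwards [Ioo_mem_nhdsGT hlt] with x hx
          exact key2 x ⟨had.trans hx.1.le, hx.2.le⟩ hx.1
        exact ge_of_tendsto htd hev
      apply fdt hdb hm0
      · exact fun t ht => hg1 t (Icc_subset_Icc_left had ht)
      · exact fun t ht => hg2 t (Icc_subset_Icc_left had ht)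
      · intro t ht
        exact le_trans hL.le (hg'' t (Icc_subset_Icc_left had ht))
      · intro t ht
        have htb : t ∈ Icc a b := Icc_subset_Icc_left had ht
        have : m ≤ g' t := by
          rcases eq_or_lt_of_le ht.1 with rfl | hlt2
          · exact hgd
          · exact key2 t htb hlt2
        rw [abs_of_nonneg (by linarith)]
        exact this
  -- middle bound
  have hbound2 : ‖∫ s in c..d, Complex.exp (2 * Real.pi * Complex.I * g s)‖ ≤ 2 * m / L := by
    have := intervalIntegral.norm_integral_le_of_norm_le_const
      (C := 1) (f := fun s => Complex.exp (2 * Real.pi * Complex.I * g s))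
      (a := c) (b := d) (fun x _ => by rw [norm_exp_two_pi_I])
    rw [one_mul] at this
    refine this.trans ?_
    rw [abs_of_nonneg (by linarith : (0:ℝ) ≤ d - c)]
    exact hmid
  -- total
  rw [hsplit]
  have htot := le_trans (norm_add_le _ _)
    (add_le_add (le_trans (norm_add_le _ _) (add_le_add hbound1 hbound2)) hbound3)
  refine htot.trans (le_of_eq ?_)
  have hLm : L = m ^ 2 := hm2.symm
  rw [hLm]
  field_simp
  ring


/-- under (a.3) and (a.4), for any phase g with monotone g'' ≥ γ''
    on (0,1], the quantity |G(t)/ψ(t)| (with G(s) = ∫₀ˢ e^{2πi g}) is bounded by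
    C·γ''(t)^{−ρ/3} for small t, and tends to 0 as t → 0⁺. -/
theorem stmt_18
    (γ'' ψ : ℝ → ℝ) (ρ : ℝ) (hρ : 0 < ρ) (hρ' : ρ < 3 / 2)
    (hpos : ∀ t ∈ Ioc (0:ℝ) 1, 0 < γ'' t)
    (hanti : AntitoneOn γ'' (Ioc (0:ℝ) 1))
    (htop : Filter.Tendsto γ'' (nhdsWithin 0 (Ioi 0)) Filter.atTop)
    (γ''' : ℝ → ℝ)
    (C₃ C₄ : ℝ) (hC₃ : 0 < C₃) (hC₄ : 0 < C₄)
    (ha3 : ∀ t ∈ Ioc (0:ℝ) 1, |γ''' t| ≤ C₃ * γ'' t ^ ((3:ℝ)/2 - ρ))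
    (ha4 : ∀ t ∈ Ioc (0:ℝ) 1, 1 / |ψ t| ≤ C₄ * |γ''' t| ^ ((1:ℝ)/3))
    (g g' g'' : ℝ → ℝ)
    (hg1 : ∀ t ∈ Ioc (0:ℝ) 1, HasDerivAt g (g' t) t)
    (hg2 : ∀ t ∈ Ioc (0:ℝ) 1, HasDerivAt g' (g'' t) t)
    (hg''mono : MonotoneOn g'' (Ioc (0:ℝ) 1) ∨ AntitoneOn g'' (Ioc (0:ℝ) 1))
    (hglower : ∀ t ∈ Ioc (0:ℝ) 1, g'' t ≥ γ'' t) :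
    (∃ C : ℝ, 0 < C ∧ ∃ T : ℝ, 0 < T ∧ T ≤ 1 ∧ ∀ t : ℝ, 0 < t → t ≤ T →
        ‖∫ s in (0:ℝ)..t, Complex.exp (2 * Real.pi * Complex.I * g s)‖ / |ψ t| ≤
          C * γ'' t ^ (-ρ/3)) ∧
    Filter.Tendsto
      (fun t : ℝ =>
        ‖∫ s in (0:ℝ)..t, Complex.exp (2 * Real.pi * Complex.I * g s)‖ / |ψ t|)
      (nhdsWithin 0 (Ioi 0)) (nhds 0) := by
  have hgcont : ContinuousOn g (Ioc (0:ℝ) 1) := fun t ht =>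
    (hg1 t ht).continuousAt.continuousWithinAt
  have hfc : ContinuousOn (fun s => Complex.exp (2 * Real.pi * Complex.I * g s))
      (Ioc (0:ℝ) 1) :=
    Complex.continuous_exp.comp_continuousOn
      (continuousOn_const.mul (Complex.continuous_ofReal.comp_continuousOn hgcont))
  have hfone : ∀ x : ℝ, ‖Complex.exp (2 * Real.pi * Complex.I * (g x : ℂ))‖ = 1 :=
    fun x => norm_exp_two_pi_I (g x)
  -- van der Corput bound on the full integral
  have hG : ∀ t : ℝ, 0 < t → t ≤ 1 →
      ‖∫ s in (0:ℝ)..t, Complex.exp (2 * Real.pi * Complex.I * g s)‖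
        ≤ 4 / Real.sqrt (γ'' t) := by
    intro t ht0 ht1
    have hγt : 0 < γ'' t := hpos t ⟨ht0, ht1⟩
    have h4 : (0:ℝ) ≤ 4 / Real.sqrt (γ'' t) := by positivity
    refine le_of_forall_pos_le_add ?_
    intro ε hε
    rcases le_or_gt t ε with hte | het
    · have htriv := intervalIntegral.norm_integral_le_of_norm_le_const (C := 1)
        (f := fun s => Complex.exp (2 * Real.pi * Complex.I * g s))
        (a := (0:ℝ)) (b := t) (fun x _ => le_of_eq (hfone x))
      rw [one_mul, sub_zero, abs_of_pos ht0] at htriv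
      linarith
    · have hε1 : ε ≤ 1 := le_trans het.le ht1
      have hint1 : IntervalIntegrable
          (fun s => Complex.exp (2 * Real.pi * Complex.I * g s)) volume 0 ε := by
        constructor
        · have hmeas : MeasureTheory.AEStronglyMeasurable
              (fun s => Complex.exp (2 * Real.pi * Complex.I * g s))
              (volume.restrict (Ioc (0:ℝ) ε)) :=
            (hfc.mono (Ioc_subset_Ioc le_rfl hε1)).aestronglyMeasurable measurableSet_Ioc
          apply MeasureTheory.Integrable.mono'
            (MeasureTheory.integrableOn_const (C := (1:ℝ)) measure_Ioc_lt_top.ne) hmeas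
          exact Filter.Eventually.of_forall fun x => le_of_eq (hfone x)
        · rw [Ioc_eq_empty (not_lt.2 hε.le)]
          exact MeasureTheory.integrableOn_empty
      have hint2 : IntervalIntegrable
          (fun s => Complex.exp (2 * Real.pi * Complex.I * g s)) volume ε t := by
        apply (hfc.mono ?_).intervalIntegrable
        rw [uIcc_of_le het.le]
        intro x hx
        exact ⟨lt_of_lt_of_le hε hx.1, hx.2.trans ht1⟩
      have hsplit := intervalIntegral.integral_add_adjacent_intervals hint1 hint2
      have hb1 : ‖∫ s in (0:ℝ)..ε, Complex.exp (2 * Real.pi * Complex.I * g s)‖ ≤ ε := by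
        have := intervalIntegral.norm_integral_le_of_norm_le_const (C := 1)
          (f := fun s => Complex.exp (2 * Real.pi * Complex.I * g s))
          (a := (0:ℝ)) (b := ε) (fun x _ => le_of_eq (hfone x))
        rwa [one_mul, sub_zero, abs_of_pos hε] at this
      have hb2 : ‖∫ s in ε..t, Complex.exp (2 * Real.pi * Complex.I * g s)‖
          ≤ 4 / Real.sqrt (γ'' t) := by
        apply sdt het.le hγt
        · exact fun s hs => hg1 s ⟨lt_of_lt_of_le hε hs.1, hs.2.trans ht1⟩
        · exact fun s hs => hg2 s ⟨lt_of_lt_of_le hε hs.1, hs.2.trans ht1⟩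
        · intro s hs
          have hsIoc : s ∈ Ioc (0:ℝ) 1 := ⟨lt_of_lt_of_le hε hs.1, hs.2.trans ht1⟩
          exact le_trans (hanti hsIoc ⟨ht0, ht1⟩ hs.2) (hglower s hsIoc)
      calc ‖∫ s in (0:ℝ)..t, Complex.exp (2 * Real.pi * Complex.I * g s)‖
          = ‖(∫ s in (0:ℝ)..ε, Complex.exp (2 * Real.pi * Complex.I * g s))
            + ∫ s in ε..t, Complex.exp (2 * Real.pi * Complex.I * g s)‖ := by rw [hsplit]
        _ ≤ ‖∫ s in (0:ℝ)..ε, Complex.exp (2 * Real.pi * Complex.I * g s)‖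
            + ‖∫ s in ε..t, Complex.exp (2 * Real.pi * Complex.I * g s)‖ := norm_add_le _ _
        _ ≤ ε + 4 / Real.sqrt (γ'' t) := add_le_add hb1 hb2
        _ = 4 / Real.sqrt (γ'' t) + ε := by ring
  set C := 4 * C₄ * C₃ ^ ((1:ℝ)/3) with hC
  have hC3p : (0:ℝ) < C₃ ^ ((1:ℝ)/3) := Real.rpow_pos_of_pos hC₃ _
  have hCpos : 0 < C := by positivity
  have hbd : ∀ t : ℝ, 0 < t → t ≤ 1 →
      ‖∫ s in (0:ℝ)..t, Complex.exp (2 * Real.pi * Complex.I * g s)‖ / |ψ t| ≤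
        C * γ'' t ^ (-ρ/3) := by
    intro t ht0 ht1
    have htIoc : t ∈ Ioc (0:ℝ) 1 := ⟨ht0, ht1⟩
    have hγt : 0 < γ'' t := hpos t htIoc
    have hγρ : (0:ℝ) < γ'' t ^ (-ρ/3) := Real.rpow_pos_of_pos hγt _
    rcases eq_or_ne (ψ t) 0 with hψ0 | hψ0
    · rw [hψ0, abs_zero, div_zero]
      positivity
    · have hψpos : 0 < |ψ t| := abs_pos.2 hψ0
      rw [div_eq_mul_inv]
      have h1 : |ψ t|⁻¹ ≤ C₄ * |γ''' t| ^ ((1:ℝ)/3) := by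
        rw [← one_div]; exact ha4 t htIoc
      have h2 : |γ''' t| ^ ((1:ℝ)/3) ≤ (C₃ * γ'' t ^ ((3:ℝ)/2 - ρ)) ^ ((1:ℝ)/3) :=
        Real.rpow_le_rpow (abs_nonneg _) (ha3 t htIoc) (by norm_num)
      have h3 : ‖∫ s in (0:ℝ)..t, Complex.exp (2 * Real.pi * Complex.I * g s)‖ * |ψ t|⁻¹
          ≤ (4 / Real.sqrt (γ'' t)) * (C₄ * (C₃ * γ'' t ^ ((3:ℝ)/2 - ρ)) ^ ((1:ℝ)/3)) := by
        apply mul_le_mul (hG t ht0 ht1)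
          (le_trans h1 (mul_le_mul_of_nonneg_left h2 hC₄.le))
          (by positivity) (by positivity)
      refine h3.trans (le_of_eq ?_)
      rw [Real.sqrt_eq_rpow,
        Real.mul_rpow hC₃.le (Real.rpow_nonneg hγt.le _),
        ← Real.rpow_mul hγt.le]
      have hsplit2 : γ'' t ^ (((3:ℝ)/2 - ρ) * ((1:ℝ)/3))
          = γ'' t ^ (-ρ/3) * γ'' t ^ ((1:ℝ)/2 : ℝ) := by
        rw [← Real.rpow_add hγt]; ring_nf
      rw [hsplit2, hC]
      have hne : γ'' t ^ ((1:ℝ)/2 : ℝ) ≠ 0 := ne_of_gt (Real.rpow_pos_of_pos hγt _)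
      field_simp
  refine ⟨⟨C, hCpos, 1, one_pos, le_refl 1, hbd⟩, ?_⟩
  apply squeeze_zero'
    (Filter.Eventually.of_forall fun t => div_nonneg (norm_nonneg _) (abs_nonneg _))
  · filter_upwards [Ioc_mem_nhdsGT (one_pos : (0:ℝ) < 1)]
      with t ht
    exact hbd t ht.1 ht.2
  · have h1 : Filter.Tendsto (fun x : ℝ => x ^ (-(ρ/3))) Filter.atTop (nhds 0) :=
      tendsto_rpow_neg_atTop (by positivity)
    have h2 := (h1.comp htop).const_mul C
    simpa [Function.comp, neg_div, mul_zero] using h2
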